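/- Let K be a field and n a positive integer. If the matrix ring Mₙ(K) is nil-clean, then K has exactly two elements (K ≅ 𝔽₂). -/

import Mathlib

/-- An element of a ring is nil-clean if it is the sum of an idempotent and a nilpotent. -/
def IsNilCleanRing (R : Type*) [Ring R] : Prop :=
  ∀ a : R, ∃ e n : R, IsIdempotentElem e ∧ IsNilpotent n ∧ a = e + n

theorem field_of_matrix_nilClean (K : Type*) [Field K] (n : ℕ) (hn : 0 < n)
    (h : IsNilCleanRing (Matrix (Fin n) (Fin n) K)) :
    Nonempty (K ≃+* ZMod 2) := by
  -- Every element of K is idempotent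
  have hsq : ∀ c : K, c * c = c := by
    intro c
    obtain ⟨E, N, hE, hN, hsum⟩ := h (c • (1 : Matrix (Fin n) (Fin n) K))
    -- N = c • 1 - E has determinant 0 since it's nilpotent
    have hdetN : N.det = 0 := by
      obtain ⟨k, hk⟩ := hN
      have : N.det ^ k = 0 := by haveI : Nonempty (Fin n) := ⟨⟨0, hn⟩⟩; rw [← Matrix.det_pow, hk, Matrix.det_zero]
      exact (pow_eq_zero_iff'.mp this).1
    have hNE : N = c • (1 : Matrix (Fin n) (Fin n) K) - E := by rw [hsum]; abel
    obtain ⟨v, hv0, hv⟩ := (Matrix.exists_mulVec_eq_zero_iff).2 (hNE ▸ hdetN)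
    -- E *ᵥ v = c • v
    have hEv : E.mulVec v = c • v := by
      rw [Matrix.sub_mulVec, sub_eq_zero] at hv
      rw [← hv, Matrix.smul_mulVec, Matrix.one_mulVec]
    have h2 : c • (c • v) = c • v := by
      calc c • (c • v) = E.mulVec (c • v) := by rw [← hEv, ← Matrix.mulVec_smul, hEv]
      _ = E.mulVec (E.mulVec v) := by rw [hEv]
      _ = (E * E).mulVec v := by rw [Matrix.mulVec_mulVec]
      _ = c • v := by rw [hE, hEv]
    obtain ⟨i, hi⟩ := Function.ne_iff.mp hv0
    have hvi : v i ≠ 0 := by simpa using hi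
    have hci := congrFun h2 i
    simp only [Pi.smul_apply, smul_eq_mul] at hci
    have : (c * c - c) * v i = 0 := by linear_combination hci
    rcases mul_eq_zero.mp this with h' | h'
    · linear_combination h'
    · exact absurd h' hvi
  -- char K = 2
  have h1 : (1 : K) ≠ 0 := one_ne_zero
  have h2 : (2 : K) = 0 := by linear_combination hsq 2
  haveI : CharP K 2 := CharTwo.of_one_ne_zero_of_two_eq_zero h1 h2
  have hbij : Function.Bijective (ZMod.castHom (dvd_refl 2) K) := by
    constructor
    · exact ZMod.castHom_injective K
    · intro x
      have : x * (x - 1) = 0 := by linear_combination hsq x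
      rcases mul_eq_zero.mp this with h' | h'
      · exact ⟨0, by simp [h']⟩
      · exact ⟨1, by rw [map_one]; exact (sub_eq_zero.mp h').symm⟩
  exact ⟨(RingEquiv.ofBijective _ hbij).symm⟩
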